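/- Fix reals Δ₋ < Δ₊, Ψ > 0, Λ₀ ∈ ℝ, and p ∈ (0,1). Define λ(p) = log(p/(1−p)), Γ(x) = min(max(x, Δ₋), Δ₊), Λ(p) = (Ψ/((Δ₊−Δ₋)/2))·(Γ(λ(p)) − (Δ₋+Δ₊)/2), V_p = p·(1−p), and for κ ≥ 0 the weight ω = 1/(1+κ·V_p) and anchored encoding Λ̂_κ = ω·Λ(p) + (1−ω)·Λ₀; let s(x) = 1/(1+exp(−x)) and Φ = s(Λ(p)). Then there exist constants C > 0 and δ > 0 such that for all κ ∈ [0, δ] and all σ ∈ (0, δ]: | ( ∫ s(Λ̂_κ + x) dN(0,σ²)(x) − p ) − (Φ − p) − κ·Φ·(1−Φ)·V_p·(Λ₀ − Λ(p)) − (σ²/2)·Φ·(1−Φ)·(1−2Φ) | ≤ C·(κ² + σ⁴). -/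

import Mathlib

open MeasureTheory ProbabilityTheory

/-- The log-odds function `λ(p) = log (p/(1-p))`. -/
noncomputable def logOdds (p : ℝ) : ℝ := Real.log (p / (1 - p))

/-- The logistic function `s(x) = 1/(1 + exp (-x))`. -/
noncomputable def logistic (x : ℝ) : ℝ := 1 / (1 + Real.exp (-x))

/-- Clipping to the interval `[Δ₋, Δ₊]`. -/
noncomputable def clip (Δm Δp x : ℝ) : ℝ := min (max x Δm) Δp

/-- The scaled BLO encoding `Λ(p)`. -/
noncomputable def bloLambda (Δm Δp Ψ p : ℝ) : ℝ :=
  Ψ / ((Δp - Δm) / 2) * (clip Δm Δp (logOdds p) - (Δm + Δp) / 2)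

/-- The anchored BLO encoding with anchor weight parameter `κ`. -/
noncomputable def bloHatKappa (Δm Δp Ψ Λ₀ κ p : ℝ) : ℝ :=
  (1 / (1 + κ * (p * (1 - p)))) * bloLambda Δm Δp Ψ p +
    (1 - 1 / (1 + κ * (p * (1 - p)))) * Λ₀

namespace BLOaux

lemma logistic_pos (x : ℝ) : 0 < logistic x := by
  unfold logistic; positivity

lemma logistic_lt_one (x : ℝ) : logistic x < 1 := by
  unfold logistic
  rw [div_lt_one (by positivity)]
  linarith [Real.exp_pos (-x)]

noncomputable def L1 (x : ℝ) : ℝ := logistic x * (1 - logistic x)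
noncomputable def L2 (x : ℝ) : ℝ := L1 x * (1 - 2 * logistic x)
noncomputable def L3 (x : ℝ) : ℝ := L1 x * (1 - 6 * logistic x + 6 * logistic x ^ 2)
noncomputable def L4 (x : ℝ) : ℝ :=
  L1 x * (1 - 14 * logistic x + 36 * logistic x ^ 2 - 24 * logistic x ^ 3)

lemma hasDerivAt_logistic (x : ℝ) : HasDerivAt logistic (L1 x) x := by
  have h2 : (1 + Real.exp (-x)) ≠ 0 := by positivity
  have h : HasDerivAt (fun x : ℝ => 1 + Real.exp (-x)) (-Real.exp (-x)) x := by
    simpa using ((Real.hasDerivAt_exp (-x)).comp x (hasDerivAt_neg x)).const_add 1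
  have h3 := h.inv h2
  have he : logistic = fun y => (1 + Real.exp (-y))⁻¹ := by
    funext y; simp [logistic, one_div]
  rw [he]
  refine h3.congr_deriv ?_
  simp only [L1, logistic]
  field_simp
  ring

lemma hasDerivAt_L1 (x : ℝ) : HasDerivAt L1 (L2 x) x := by
  have h := hasDerivAt_logistic x
  have h2 : HasDerivAt (fun y => logistic y * (1 - logistic y))
      (L1 x * (1 - logistic x) + logistic x * (-L1 x)) x := h.mul (h.const_sub 1)
  rw [show L1 = fun y => logistic y * (1 - logistic y) from rfl]
  convert h2 using 1
  simp only [L1, L2]; ring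

lemma hasDerivAt_L2 (x : ℝ) : HasDerivAt L2 (L3 x) x := by
  have hs := hasDerivAt_logistic x
  have h1 := hasDerivAt_L1 x
  have h2 : HasDerivAt (fun y => L1 y * (1 - 2 * logistic y))
      (L2 x * (1 - 2 * logistic x) + L1 x * (-(2 * L1 x))) x :=
    h1.mul ((hs.const_mul 2).const_sub 1)
  rw [show L2 = fun y => L1 y * (1 - 2 * logistic y) from rfl]
  convert h2 using 1
  simp only [L1, L2, L3]; ring

lemma hasDerivAt_L3 (x : ℝ) : HasDerivAt L3 (L4 x) x := by
  have hs := hasDerivAt_logistic x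
  have h1 := hasDerivAt_L1 x
  have hq : HasDerivAt (fun y => 1 - 6 * logistic y + 6 * logistic y ^ 2)
      (-(6 * L1 x) + 6 * (2 * logistic x ^ 1 * L1 x)) x :=
    ((hs.const_mul 6).const_sub 1).add ((hs.pow 2).const_mul 6)
  have h2 := h1.mul hq
  rw [show L3 = fun y => L1 y * (1 - 6 * logistic y + 6 * logistic y ^ 2) from rfl]
  refine h2.congr_deriv ?_
  simp only [L1, L2, L3, L4]; ring

lemma abs_L1_le (x : ℝ) : |L1 x| ≤ 1/4 := by
  have h1 := logistic_pos x
  have h2 := logistic_lt_one x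
  rw [abs_of_pos (by simp only [L1]; nlinarith : (0:ℝ) < L1 x)]
  simp only [L1]; nlinarith [sq_nonneg (logistic x - 1/2)]

lemma abs_L2_le (x : ℝ) : |L2 x| ≤ 1 := by
  have h1 := logistic_pos x
  have h2 := logistic_lt_one x
  have : |L2 x| = |L1 x| * |1 - 2 * logistic x| := by
    rw [show L2 x = L1 x * (1 - 2 * logistic x) from rfl, abs_mul]
  rw [this]
  have hb : |1 - 2 * logistic x| ≤ 1 := by rw [abs_le]; constructor <;> linarith
  calc |L1 x| * |1 - 2 * logistic x| ≤ (1/4) * 1 :=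
        mul_le_mul (abs_L1_le x) hb (abs_nonneg _) (by norm_num)
    _ ≤ 1 := by norm_num

lemma abs_L3_le (x : ℝ) : |L3 x| ≤ 4 := by
  have h1 := logistic_pos x
  have h2 := logistic_lt_one x
  have : |L3 x| = |L1 x| * |1 - 6 * logistic x + 6 * logistic x ^ 2| := by
    rw [show L3 x = L1 x * (1 - 6 * logistic x + 6 * logistic x ^ 2) from rfl, abs_mul]
  rw [this]
  have hb : |1 - 6 * logistic x + 6 * logistic x ^ 2| ≤ 13 := by
    rw [abs_le]; constructor <;> nlinarith
  calc _ ≤ (1/4) * 13 := mul_le_mul (abs_L1_le x) hb (abs_nonneg _) (by norm_num)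
    _ ≤ 4 := by norm_num

lemma abs_L4_le (x : ℝ) : |L4 x| ≤ 19 := by
  have h1 := logistic_pos x
  have h2 := logistic_lt_one x
  have : |L4 x| = |L1 x| * |1 - 14 * logistic x + 36 * logistic x ^ 2 - 24 * logistic x ^ 3| := by
    rw [show L4 x = L1 x * (1 - 14 * logistic x + 36 * logistic x ^ 2 - 24 * logistic x ^ 3) from rfl,
      abs_mul]
  rw [this]
  have hb : |1 - 14 * logistic x + 36 * logistic x ^ 2 - 24 * logistic x ^ 3| ≤ 75 := by
    have c2 : logistic x ^ 2 < 1 := pow_lt_one₀ (le_of_lt h1) h2 (by norm_num)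
    have c3 : logistic x ^ 3 < 1 := pow_lt_one₀ (le_of_lt h1) h2 (by norm_num)
    have c2p : 0 < logistic x ^ 2 := pow_pos h1 2
    have c3p : 0 < logistic x ^ 3 := pow_pos h1 3
    rw [abs_le]; constructor <;> nlinarith
  calc _ ≤ (1/4) * 75 := mul_le_mul (abs_L1_le x) hb (abs_nonneg _) (by norm_num)
    _ ≤ 19 := by norm_num

lemma step_bound {q q' : ℝ → ℝ} (hd : ∀ t, HasDerivAt q (q' t) t) (h0 : q 0 = 0)
    {K : ℝ} (hK : 0 ≤ K) (n : ℕ) (hb : ∀ t, |q' t| ≤ K * |t| ^ n) (x : ℝ) :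
    |q x| ≤ K * |x| ^ (n + 1) / (n + 1) := by
  have main : ∀ (r r' : ℝ → ℝ), (∀ t, HasDerivAt r (r' t) t) → r 0 = 0 →
      (∀ t, |r' t| ≤ K * |t| ^ n) → ∀ y, 0 ≤ y → r y ≤ K * y ^ (n + 1) / (n + 1) := by
    intro r r' hrd hr0 hrb y hy
    set F : ℝ → ℝ := fun t => K * t ^ (n + 1) / (n + 1) - r t with hF
    have hdF : ∀ t, HasDerivAt F (K * t ^ n - r' t) t := by
      intro t
      have h1 : HasDerivAt (fun t : ℝ => K * t ^ (n + 1) / (n + 1)) (K * t ^ n) t := by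
        have h2 := ((hasDerivAt_pow (n + 1) t).const_mul K).div_const ((n : ℝ) + 1)
        refine h2.congr_deriv ?_
        push_cast
        have : ((n : ℝ) + 1) ≠ 0 := by positivity
        field_simp
      exact h1.sub (hrd t)
    have hmono : MonotoneOn F (Set.Icc 0 y) := by
      apply monotoneOn_of_deriv_nonneg (convex_Icc 0 y)
      · exact fun t _ => (hdF t).continuousAt.continuousWithinAt
      · exact fun t _ => (hdF t).differentiableAt.differentiableWithinAt
      · intro t ht
        have ht0 : 0 ≤ t := (interior_subset ht).1
        rw [(hdF t).deriv]
        have := hrb t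
        rw [abs_le] at this
        have : r' t ≤ K * t ^ n := by
          calc r' t ≤ K * |t| ^ n := le_trans (le_abs_self _) (hrb t)
          _ = K * t ^ n := by rw [abs_of_nonneg ht0]
        linarith
    have h01 : (0 : ℝ) ∈ Set.Icc 0 y := ⟨le_refl _, hy⟩
    have h02 : y ∈ Set.Icc (0:ℝ) y := ⟨hy, le_refl _⟩
    have := hmono h01 h02 hy
    simp only [hF, hr0, sub_zero] at this
    simp only [ne_eq, zero_pow, Nat.succ_ne_zero, not_false_iff, mul_zero, zero_div, zero_sub] at this
    -- this : K * 0 ^ (n+1) / (n+1) - 0 ≤ K * y^(n+1)/(n+1) - r y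
    nlinarith [this]
  rcases le_or_gt 0 x with hx | hx
  · rw [abs_le]
    constructor
    · have := main (fun t => -q t) (fun t => -q' t) (fun t => (hd t).neg) (by simp [h0])
        (fun t => by rw [abs_neg]; exact hb t) x hx
      rw [abs_of_nonneg hx]
      linarith
    · have := main q q' hd h0 hb x hx
      rw [abs_of_nonneg hx]
      linarith
  · have hneg : ∀ t, HasDerivAt (fun t => q (-t)) (-(q' (-t))) t := by
      intro t
      have := (hd (-t)).comp t (hasDerivAt_neg t)
      simpa [mul_comm, Function.comp_def] using this
    have hb' : ∀ t, |(fun t => -(q' (-t))) t| ≤ K * |t| ^ n := by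
      intro t
      simp only [abs_neg]
      simpa [abs_neg] using hb (-t)
    rw [abs_le]
    have hx' : 0 ≤ -x := by linarith
    have hxa : (-x) ^ (n+1) = |x| ^ (n+1) := by rw [← abs_neg x, abs_of_nonneg hx']
    constructor
    · have := main (fun t => -q (-t)) (fun t => q' (-t))
        (fun t => by simpa [Pi.neg_def] using (hneg t).neg) (by simp [h0])
        (fun t => by simpa [abs_neg] using hb (-t)) (-x) hx'
      simp only [neg_neg, hxa] at this
      linarith
    · have := main (fun t => q (-t)) (fun t => -(q' (-t))) hneg (by simp [h0]) hb' (-x) hx'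
      simp only [neg_neg, hxa] at this
      linarith

lemma shiftDeriv {g g' : ℝ → ℝ} (hg : ∀ u, HasDerivAt g (g' u) u) (a t : ℝ) :
    HasDerivAt (fun t => g (a + t)) (g' (a + t)) t := by
  simpa [Function.comp_def] using (hg (a + t)).comp t ((hasDerivAt_id t).const_add a)

lemma L2_lip (a h : ℝ) : |L2 (a + h) - L2 a| ≤ 4 * |h| := by
  have hd : ∀ t, HasDerivAt (fun t => L2 (a + t) - L2 a) (L3 (a + t)) t :=
    fun t => (shiftDeriv hasDerivAt_L2 a t).sub_const (L2 a)
  have := step_bound hd (by simp) (by norm_num : (0:ℝ) ≤ 4) 0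
    (fun t => by simpa using abs_L3_le (a + t)) h
  simpa using this

lemma logistic_taylor2 (a h : ℝ) : |logistic (a + h) - (logistic a + L1 a * h)| ≤ |h| ^ 2 / 2 := by
  have hd1 : ∀ t, HasDerivAt (fun t => L1 (a + t) - L1 a) (L2 (a + t)) t :=
    fun t => (shiftDeriv hasDerivAt_L1 a t).sub_const (L1 a)
  have h1 : ∀ t, |L1 (a + t) - L1 a| ≤ 1 * |t| ^ 1 := by
    intro t
    have := step_bound hd1 (by simp) (by norm_num : (0:ℝ) ≤ 1) 0
      (fun u => by simpa using abs_L2_le (a + u)) t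
    simpa using this
  have hd0 : ∀ t, HasDerivAt (fun t => logistic (a + t) - (logistic a + L1 a * t))
      (L1 (a + t) - L1 a) t := by
    intro t
    have := (shiftDeriv hasDerivAt_logistic a t).sub
      (((hasDerivAt_id t).const_mul (L1 a)).const_add (logistic a))
    simpa [Pi.sub_def] using this
  have := step_bound hd0 (by simp) (by norm_num : (0:ℝ) ≤ 1) 1 h1 h
  norm_num at this ⊢
  linarith

lemma logistic_taylor4 (a h : ℝ) :
    |logistic (a + h) - (logistic a + L1 a * h + L2 a * h ^ 2 / 2 + L3 a * h ^ 3 / 6)| ≤ |h| ^ 4 := by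
  have hd3 : ∀ t, HasDerivAt (fun t => L3 (a + t) - L3 a) (L4 (a + t)) t :=
    fun t => (shiftDeriv hasDerivAt_L3 a t).sub_const _
  have h3 : ∀ t, |L3 (a + t) - L3 a| ≤ 19 * |t| ^ 1 := by
    intro t
    have := step_bound hd3 (by simp) (by norm_num : (0:ℝ) ≤ 19) 0
      (fun u => by simpa using abs_L4_le (a + u)) t
    simpa using this
  have hd2 : ∀ t, HasDerivAt (fun t => L2 (a + t) - (L2 a + L3 a * t)) (L3 (a + t) - L3 a) t := by
    intro t
    have := (shiftDeriv hasDerivAt_L2 a t).sub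
      (((hasDerivAt_id t).const_mul (L3 a)).const_add (L2 a))
    simpa [Pi.sub_def] using this
  have h2 : ∀ t, |L2 (a + t) - (L2 a + L3 a * t)| ≤ (19/2) * |t| ^ 2 := by
    intro t
    have := step_bound hd2 (by simp) (by norm_num : (0:ℝ) ≤ 19) 1 h3 t
    norm_num at this ⊢
    linarith
  have hd1 : ∀ t, HasDerivAt (fun t => L1 (a + t) - (L1 a + L2 a * t + L3 a * t ^ 2 / 2))
      (L2 (a + t) - (L2 a + L3 a * t)) t := by
    intro t
    have hp : HasDerivAt (fun t : ℝ => L1 a + L2 a * t + L3 a * t ^ 2 / 2)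
        (L2 a + L3 a * t) t := by
      have := (((hasDerivAt_id t).const_mul (L2 a)).const_add (L1 a)).add
        (((hasDerivAt_pow 2 t).const_mul (L3 a)).div_const 2)
      refine this.congr_deriv ?_
      push_cast; ring
    exact (shiftDeriv hasDerivAt_L1 a t).sub hp
  have h1 : ∀ t, |L1 (a + t) - (L1 a + L2 a * t + L3 a * t ^ 2 / 2)| ≤ (19/6) * |t| ^ 3 := by
    intro t
    have := step_bound hd1 (by simp) (by norm_num : (0:ℝ) ≤ 19/2) 2 h2 t
    norm_num at this ⊢
    linarith
  have hd0 : ∀ t, HasDerivAt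
      (fun t => logistic (a + t) - (logistic a + L1 a * t + L2 a * t ^ 2 / 2 + L3 a * t ^ 3 / 6))
      (L1 (a + t) - (L1 a + L2 a * t + L3 a * t ^ 2 / 2)) t := by
    intro t
    have hp : HasDerivAt
        (fun t : ℝ => logistic a + L1 a * t + L2 a * t ^ 2 / 2 + L3 a * t ^ 3 / 6)
        (L1 a + L2 a * t + L3 a * t ^ 2 / 2) t := by
      have := ((((hasDerivAt_id t).const_mul (L1 a)).const_add (logistic a)).add
        (((hasDerivAt_pow 2 t).const_mul (L2 a)).div_const 2)).add
        (((hasDerivAt_pow 3 t).const_mul (L3 a)).div_const 6)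
      refine this.congr_deriv ?_
      push_cast; ring
    exact (shiftDeriv hasDerivAt_logistic a t).sub hp
  have hfin := step_bound hd0 (by simp) (by norm_num : (0:ℝ) ≤ 19/6) 3 h1 h
  have hp4 : (0:ℝ) ≤ |h| ^ 4 := pow_nonneg (abs_nonneg h) 4
  norm_num at hfin ⊢
  linarith

section Gaussian

open Real

variable {σ : ℝ}

lemma continuous_logistic : Continuous logistic := by
  apply Continuous.div continuous_const
  · continuity
  · intro x; positivity

lemma v_ne_zero (hσ : 0 < σ) : ((σ^2).toNNReal) ≠ 0 := by
  simp only [ne_eq, Real.toNNReal_eq_zero, not_le]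
  positivity

lemma coe_v (hσ : 0 < σ) : (((σ^2).toNNReal) : ℝ) = σ^2 :=
  Real.coe_toNNReal _ (sq_nonneg σ)

lemma pdf_eq (hσ : 0 < σ) (x : ℝ) :
    gaussianPDFReal 0 (σ^2).toNNReal x
      = (Real.sqrt (2*π*σ^2))⁻¹ * Real.exp (-(2*σ^2)⁻¹ * x^2) := by
  rw [gaussianPDFReal, coe_v hσ, sub_zero]
  congr 1
  congr 1
  ring

lemma integrable_exp_pdfform (hσ : 0 < σ) (n : ℕ) :
    Integrable (fun x : ℝ => x ^ n * Real.exp (-(2*σ^2)⁻¹ * x^2)) := by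
  have hb : (0:ℝ) < (2*σ^2)⁻¹ := by positivity
  have hn : (0:ℝ) ≤ (n:ℝ) := Nat.cast_nonneg n
  have := integrable_rpow_mul_exp_neg_mul_sq hb (show (-1:ℝ) < (n:ℝ) by linarith)
  simpa [Real.rpow_natCast] using this

lemma integrable_pow_pdf (hσ : 0 < σ) (n : ℕ) :
    Integrable (fun x : ℝ => x ^ n * gaussianPDFReal 0 (σ^2).toNNReal x) := by
  have heq : (fun x : ℝ => x ^ n * gaussianPDFReal 0 (σ^2).toNNReal x)
      = fun x => (Real.sqrt (2*π*σ^2))⁻¹ * (x ^ n * Real.exp (-(2*σ^2)⁻¹ * x^2)) :=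
    funext fun x => by rw [pdf_eq hσ]; ring
  rw [heq]
  exact (integrable_exp_pdfform hσ n).const_mul _

lemma odd_vanish (hσ : 0 < σ) (n : ℕ) (hn : Odd n) :
    ∫ x : ℝ, x ^ n * gaussianPDFReal 0 (σ^2).toNNReal x = 0 := by
  have h := MeasureTheory.integral_neg_eq_self
    (fun x : ℝ => x ^ n * gaussianPDFReal 0 (σ^2).toNNReal x) volume
  have heq : ∀ x : ℝ, (-x) ^ n * gaussianPDFReal 0 (σ^2).toNNReal (-x)
      = -(x ^ n * gaussianPDFReal 0 (σ^2).toNNReal x) := by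
    intro x
    rw [hn.neg_pow]
    have : gaussianPDFReal 0 (σ^2).toNNReal (-x) = gaussianPDFReal 0 (σ^2).toNNReal x := by
      rw [pdf_eq hσ, pdf_eq hσ, neg_sq]
    rw [this]; ring
  simp_rw [heq, integral_neg] at h
  linarith

lemma even_integral (hσ : 0 < σ) (n : ℕ) :
    ∫ x : ℝ, x ^ (2*n) * Real.exp (-(2*σ^2)⁻¹ * x^2)
      = ((2*σ^2)⁻¹ : ℝ) ^ (-((2*(n:ℝ))+1)/2) * Real.Gamma (((2*(n:ℝ))+1)/2) := by
  have hb : (0:ℝ) < (2*σ^2)⁻¹ := by positivity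
  calc ∫ x : ℝ, x ^ (2*n) * Real.exp (-(2*σ^2)⁻¹ * x^2)
      = ∫ x : ℝ, |x| ^ (2*n) * Real.exp (-(2*σ^2)⁻¹ * |x|^2) := by
        congr 1; funext x
        rw [pow_mul, pow_mul, sq_abs]
    _ = 2 * ∫ x in Set.Ioi (0:ℝ), x ^ (2*n) * Real.exp (-(2*σ^2)⁻¹ * x^2) :=
        integral_comp_abs (f := fun x => x ^ (2*n) * Real.exp (-(2*σ^2)⁻¹ * x^2))
    _ = 2 * ∫ x in Set.Ioi (0:ℝ),
          x ^ ((2*(n:ℝ))) * Real.exp (-(2*σ^2)⁻¹ * x ^ (2:ℝ)) := by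
        congr 1
        apply setIntegral_congr_fun measurableSet_Ioi
        intro x hx
        dsimp only
        rw [show ((2*(n:ℝ))) = (((2*n : ℕ)):ℝ) by push_cast; ring, Real.rpow_natCast,
          show ((2:ℝ)) = (((2:ℕ)):ℝ) by norm_num, Real.rpow_natCast]
    _ = 2 * (((2*σ^2)⁻¹ : ℝ) ^ (-((2*(n:ℝ))+1)/2) * (1/2) * Real.Gamma (((2*(n:ℝ))+1)/2)) := by
        have hn : (0:ℝ) ≤ (n:ℝ) := Nat.cast_nonneg n
        rw [integral_rpow_mul_exp_neg_mul_rpow (by norm_num : (0:ℝ) < 2)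
          (by linarith : (-1:ℝ) < 2*(n:ℝ)) hb]
    _ = _ := by ring

lemma sqrt_2pi_eq (hσ : 0 < σ) :
    Real.sqrt (2*π*σ^2) = Real.sqrt π * Real.sqrt (2*σ^2) := by
  rw [← Real.sqrt_mul pi_pos.le]
  congr 1; ring

lemma rpow_A_inv (hσ : 0 < σ) (y : ℝ) :
    ((2*σ^2)⁻¹ : ℝ) ^ (-y) = (2*σ^2 : ℝ) ^ y := by
  have hA : (0:ℝ) < 2*σ^2 := by positivity
  rw [Real.inv_rpow hA.le, Real.rpow_neg hA.le, inv_inv]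

lemma rpow_A_inv' (hσ : 0 < σ) (y z : ℝ) (hyz : y = -z) :
    ((2*σ^2)⁻¹ : ℝ) ^ y = (2*σ^2 : ℝ) ^ z := by
  rw [hyz, rpow_A_inv hσ]

lemma Gamma_three_half : Real.Gamma (3/2) = Real.sqrt π / 2 := by
  have h := Real.Gamma_add_one (by norm_num : (1/2 : ℝ) ≠ 0)
  rw [show (3/2 : ℝ) = 1/2 + 1 by norm_num, h, Real.Gamma_one_half_eq]
  ring

lemma Gamma_five_half : Real.Gamma (5/2) = 3 * Real.sqrt π / 4 := by
  have h := Real.Gamma_add_one (by norm_num : (3/2 : ℝ) ≠ 0)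
  rw [show (5/2 : ℝ) = 3/2 + 1 by norm_num, h, Gamma_three_half]
  ring

lemma I2 (hσ : 0 < σ) : ∫ x : ℝ, x ^ 2 * Real.exp (-(2*σ^2)⁻¹ * x^2)
    = (2*σ^2 : ℝ) ^ ((3:ℝ)/2) * (Real.sqrt π / 2) := by
  have h := even_integral hσ 1
  rw [show (2*1 : ℕ) = 2 from rfl] at h
  rw [h, rpow_A_inv' hσ _ ((3:ℝ)/2) (by norm_num),
    show ((2*((1:ℕ):ℝ))+1)/2 = (3:ℝ)/2 by norm_num, Gamma_three_half]

lemma I4 (hσ : 0 < σ) : ∫ x : ℝ, x ^ 4 * Real.exp (-(2*σ^2)⁻¹ * x^2)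
    = (2*σ^2 : ℝ) ^ ((5:ℝ)/2) * (3 * Real.sqrt π / 4) := by
  have h := even_integral hσ 2
  rw [show (2*2 : ℕ) = 4 from rfl] at h
  rw [h, rpow_A_inv' hσ _ ((5:ℝ)/2) (by norm_num),
    show ((2*((2:ℕ):ℝ))+1)/2 = (5:ℝ)/2 by norm_num, Gamma_five_half]

lemma moment0 (hσ : 0 < σ) : ∫ x : ℝ, gaussianPDFReal 0 (σ^2).toNNReal x = 1 :=
  integral_gaussianPDFReal_eq_one 0 (v_ne_zero hσ)

lemma moment2 (hσ : 0 < σ) :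
    ∫ x : ℝ, x ^ 2 * gaussianPDFReal 0 (σ^2).toNNReal x = σ^2 := by
  have heq : (fun x : ℝ => x ^ 2 * gaussianPDFReal 0 (σ^2).toNNReal x)
      = fun x => (Real.sqrt (2*π*σ^2))⁻¹ * (x ^ 2 * Real.exp (-(2*σ^2)⁻¹ * x^2)) :=
    funext fun x => by rw [pdf_eq hσ]; ring
  rw [heq, integral_const_mul, I2 hσ]
  have hA : (0:ℝ) < 2*σ^2 := by positivity
  have h32 : (2*σ^2 : ℝ) ^ ((3:ℝ)/2) = (2*σ^2) * Real.sqrt (2*σ^2) := by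
    rw [show (3:ℝ)/2 = 1 + 1/2 by norm_num, Real.rpow_add hA, Real.rpow_one]
    congr 1
    rw [Real.sqrt_eq_rpow]
  rw [h32, sqrt_2pi_eq hσ]
  have h1 : 0 < Real.sqrt (2*σ^2) := Real.sqrt_pos.mpr hA
  have h2 : 0 < Real.sqrt π := Real.sqrt_pos.mpr pi_pos
  field_simp

lemma moment4 (hσ : 0 < σ) :
    ∫ x : ℝ, x ^ 4 * gaussianPDFReal 0 (σ^2).toNNReal x = 3 * σ^4 := by
  have heq : (fun x : ℝ => x ^ 4 * gaussianPDFReal 0 (σ^2).toNNReal x)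
      = fun x => (Real.sqrt (2*π*σ^2))⁻¹ * (x ^ 4 * Real.exp (-(2*σ^2)⁻¹ * x^2)) :=
    funext fun x => by rw [pdf_eq hσ]; ring
  rw [heq, integral_const_mul, I4 hσ]
  have hA : (0:ℝ) < 2*σ^2 := by positivity
  have h52 : (2*σ^2 : ℝ) ^ ((5:ℝ)/2) = (2*σ^2)^2 * Real.sqrt (2*σ^2) := by
    rw [show (5:ℝ)/2 = 2 + 1/2 by norm_num, Real.rpow_add hA]
    congr 1
    · rw [show (2:ℝ) = ((2:ℕ):ℝ) by norm_num, Real.rpow_natCast]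
    · rw [Real.sqrt_eq_rpow]
  rw [h52, sqrt_2pi_eq hσ]
  have h1 : 0 < Real.sqrt (2*σ^2) := Real.sqrt_pos.mpr hA
  have h2 : 0 < Real.sqrt π := Real.sqrt_pos.mpr pi_pos
  field_simp
  ring

lemma moment1 (hσ : 0 < σ) :
    ∫ x : ℝ, x ^ 1 * gaussianPDFReal 0 (σ^2).toNNReal x = 0 :=
  odd_vanish hσ 1 odd_one

lemma moment3 (hσ : 0 < σ) :
    ∫ x : ℝ, x ^ 3 * gaussianPDFReal 0 (σ^2).toNNReal x = 0 :=
  odd_vanish hσ 3 (by decide)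

lemma integral_gaussianReal_eq (hσ : 0 < σ) (g : ℝ → ℝ) :
    ∫ x, g x ∂(gaussianReal 0 (σ^2).toNNReal)
      = ∫ x, gaussianPDFReal 0 (σ^2).toNNReal x * g x := by
  rw [gaussianReal_of_var_ne_zero _ (v_ne_zero hσ)]
  have hmeas : Measurable fun x => (gaussianPDFReal 0 (σ^2).toNNReal x).toNNReal :=
    (measurable_gaussianPDFReal _ _).real_toNNReal
  have hpdf : gaussianPDF 0 (σ^2).toNNReal
      = fun x => (((gaussianPDFReal 0 (σ^2).toNNReal x).toNNReal : NNReal) : ENNReal) := rfl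
  rw [hpdf, integral_withDensity_eq_integral_smul hmeas g]
  congr 1
  funext x
  rw [NNReal.smul_def, Real.coe_toNNReal _ (gaussianPDFReal_nonneg _ _ x), smul_eq_mul]

lemma gaussian_taylor (hσ : 0 < σ) (y : ℝ) :
    |(∫ x, logistic (y + x) ∂(gaussianReal 0 (σ^2).toNNReal))
      - (logistic y + σ^2/2 * L2 y)| ≤ 3 * σ^4 := by
  rw [integral_gaussianReal_eq hσ]
  set pdf : ℝ → ℝ := fun x => gaussianPDFReal 0 (σ^2).toNNReal x with hpdfdef
  have pdf_nonneg : ∀ x, 0 ≤ pdf x := fun x => gaussianPDFReal_nonneg _ _ x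
  have i0 : Integrable pdf := integrable_gaussianPDFReal 0 _
  have i1 : Integrable (fun x : ℝ => x ^ 1 * pdf x) := integrable_pow_pdf hσ 1
  have i2 : Integrable (fun x : ℝ => x ^ 2 * pdf x) := integrable_pow_pdf hσ 2
  have i3 : Integrable (fun x : ℝ => x ^ 3 * pdf x) := integrable_pow_pdf hσ 3
  have i4 : Integrable (fun x : ℝ => x ^ 4 * pdf x) := integrable_pow_pdf hσ 4
  have hm0 : (∫ x : ℝ, pdf x) = 1 := moment0 hσ
  have hm1 : (∫ x : ℝ, x ^ 1 * pdf x) = 0 := moment1 hσ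
  have hm2 : (∫ x : ℝ, x ^ 2 * pdf x) = σ^2 := moment2 hσ
  have hm3 : (∫ x : ℝ, x ^ 3 * pdf x) = 0 := moment3 hσ
  have hm4 : (∫ x : ℝ, x ^ 4 * pdf x) = 3 * σ^4 := moment4 hσ
  set P : ℝ → ℝ := fun x => logistic y + L1 y * x + L2 y * x ^ 2 / 2 + L3 y * x ^ 3 / 6 with hP
  have e0 : Integrable (fun x : ℝ => logistic y * pdf x) := i0.const_mul _
  have e1 : Integrable (fun x : ℝ => L1 y * (x ^ 1 * pdf x)) := i1.const_mul _
  have e2 : Integrable (fun x : ℝ => L2 y / 2 * (x ^ 2 * pdf x)) := i2.const_mul _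
  have e3 : Integrable (fun x : ℝ => L3 y / 6 * (x ^ 3 * pdf x)) := i3.const_mul _
  have e01 : Integrable (fun x : ℝ => logistic y * pdf x + L1 y * (x ^ 1 * pdf x)) := e0.add e1
  have e012 : Integrable (fun x : ℝ => logistic y * pdf x + L1 y * (x ^ 1 * pdf x)
      + L2 y / 2 * (x ^ 2 * pdf x)) := e01.add e2
  have hsplit : (fun x => pdf x * P x) = fun x =>
      logistic y * pdf x + L1 y * (x ^ 1 * pdf x) + L2 y / 2 * (x ^ 2 * pdf x)
        + L3 y / 6 * (x ^ 3 * pdf x) := by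
    funext x; simp only [hP]; ring
  have iP : Integrable (fun x => pdf x * P x) := by
    rw [hsplit]
    exact e012.add e3
  have hPint : ∫ x, pdf x * P x = logistic y + σ^2/2 * L2 y := by
    rw [hsplit, integral_add e012 e3, integral_add e01 e2, integral_add e0 e1,
      integral_const_mul, integral_const_mul, integral_const_mul, integral_const_mul,
      hm0, hm1, hm2, hm3]
    ring
  have ilog : Integrable (fun x => pdf x * logistic (y + x)) := by
    apply Integrable.mono' i0
    · exact ((measurable_gaussianPDFReal 0 _).mul
        ((continuous_logistic.comp (continuous_const.add continuous_id)).measurable)).aestronglyMeasurable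
    · filter_upwards with x
      rw [Real.norm_eq_abs, abs_mul, abs_of_nonneg (pdf_nonneg x)]
      have h1 := logistic_pos (y + x)
      have h2 := logistic_lt_one (y + x)
      have h3 : |logistic (y + x)| ≤ 1 := by rw [abs_of_pos h1]; linarith
      nlinarith [pdf_nonneg x]
  have key : (∫ x, pdf x * logistic (y + x)) - (logistic y + σ^2/2 * L2 y)
      = ∫ x, pdf x * (logistic (y + x) - P x) := by
    rw [← hPint, ← integral_sub ilog iP]
    congr 1; funext x; ring
  have habs : |∫ x, pdf x * (logistic (y + x) - P x)|
      ≤ ∫ x, |pdf x * (logistic (y + x) - P x)| := by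
    have h : ‖∫ x, pdf x * (logistic (y + x) - P x)‖
        ≤ ∫ x, ‖pdf x * (logistic (y + x) - P x)‖ :=
      norm_integral_le_integral_norm _
    simp only [Real.norm_eq_abs] at h
    exact h
  have hle : (fun x => |pdf x * (logistic (y + x) - P x)|) ≤ fun x => x ^ 4 * pdf x := by
    intro x
    dsimp only
    rw [abs_mul, abs_of_nonneg (pdf_nonneg x)]
    have ht := logistic_taylor4 y x
    have hx4 : |x| ^ 4 = x ^ 4 := by
      rw [← abs_pow]; exact abs_of_nonneg (by positivity)
    calc pdf x * |logistic (y + x) - P x| ≤ pdf x * |x| ^ 4 :=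
          mul_le_mul_of_nonneg_left ht (pdf_nonneg x)
      _ = x ^ 4 * pdf x := by rw [hx4]; ring
  have idiff : Integrable (fun x => |pdf x * (logistic (y + x) - P x)|) := by
    have h := (ilog.sub iP).abs
    have heq : (fun a => |((fun x => pdf x * logistic (y + x)) - fun x => pdf x * P x) a|)
        = fun x => |pdf x * (logistic (y + x) - P x)| := by
      funext a
      simp only [Pi.sub_apply]
      rw [← mul_sub]
    rwa [heq] at h
  have hbound : (∫ x, |pdf x * (logistic (y + x) - P x)|) ≤ ∫ x, x ^ 4 * pdf x :=
    integral_mono idiff i4 hle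
  calc |(∫ x, pdf x * logistic (y + x)) - (logistic y + σ^2/2 * L2 y)|
      = |∫ x, pdf x * (logistic (y + x) - P x)| := by rw [key]
    _ ≤ ∫ x, |pdf x * (logistic (y + x) - P x)| := habs
    _ ≤ ∫ x, x ^ 4 * pdf x := hbound
    _ = 3 * σ^4 := hm4

end Gaussian

lemma abs_add4 (a b c d : ℝ) : |a + b + c + d| ≤ |a| + |b| + |c| + |d| := by
  calc |a + b + c + d| ≤ |a + b + c| + |d| := abs_add_le _ _
    _ ≤ |a + b| + |c| + |d| := by linarith [abs_add_le (a + b) c]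
    _ ≤ |a| + |b| + |c| + |d| := by linarith [abs_add_le a b]

open Real in
lemma main_est (Λ Λ₀ V : ℝ) (hV : 0 < V) (κ σ : ℝ) (hκ0 : 0 ≤ κ) (hσ0 : 0 < σ) :
    |(∫ x, logistic (1 / (1 + κ * V) * Λ + (1 - 1 / (1 + κ * V)) * Λ₀ + x)
        ∂(gaussianReal 0 ((σ^2).toNNReal)))
      - logistic Λ - κ * logistic Λ * (1 - logistic Λ) * V * (Λ₀ - Λ)
      - σ^2 / 2 * (logistic Λ * (1 - logistic Λ) * (1 - 2 * logistic Λ))|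
    ≤ (3 + (V^2 * |Λ₀ - Λ| + V^2 * (Λ₀ - Λ)^2 / 2) + V * |Λ₀ - Λ| + 1) * (κ^2 + σ^4) := by
  have hD : (0:ℝ) < 1 + κ * V := by nlinarith
  have hD1 : (1:ℝ) ≤ 1 + κ * V := by nlinarith
  set h : ℝ := κ * V / (1 + κ * V) * (Λ₀ - Λ) with hh
  have hhat : 1 / (1 + κ * V) * Λ + (1 - 1 / (1 + κ * V)) * Λ₀ = Λ + h := by
    rw [hh]; field_simp; ring
  rw [hhat]
  have E1 := gaussian_taylor hσ0 (Λ + h)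
  have E2 := logistic_taylor2 Λ h
  have E3 := L2_lip Λ h
  have habs : |h| ≤ κ * V * |Λ₀ - Λ| := by
    rw [hh, abs_mul]
    have h1 : |κ * V / (1 + κ * V)| = κ * V / (1 + κ * V) := abs_of_nonneg (by positivity)
    rw [h1]
    have h2 : κ * V / (1 + κ * V) ≤ κ * V := div_le_self (by positivity) hD1
    exact mul_le_mul_of_nonneg_right h2 (abs_nonneg _)
  have hdiff : |h - κ * V * (Λ₀ - Λ)| ≤ κ^2 * V^2 * |Λ₀ - Λ| := by
    have heq : h - κ * V * (Λ₀ - Λ) = -(κ^2 * V^2 / (1 + κ * V)) * (Λ₀ - Λ) := by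
      rw [hh]; field_simp; ring
    rw [heq, abs_mul, abs_neg, abs_of_nonneg (by positivity : (0:ℝ) ≤ κ^2 * V^2 / (1 + κ * V))]
    exact mul_le_mul_of_nonneg_right (div_le_self (by positivity) hD1) (abs_nonneg _)
  have hL1 := abs_L1_le Λ
  set I : ℝ := ∫ x, logistic (Λ + h + x) ∂(gaussianReal 0 ((σ^2).toNNReal)) with hI
  have decomp : I - logistic Λ - κ * logistic Λ * (1 - logistic Λ) * V * (Λ₀ - Λ)
      - σ^2 / 2 * (logistic Λ * (1 - logistic Λ) * (1 - 2 * logistic Λ))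
    = (I - (logistic (Λ + h) + σ^2/2 * L2 (Λ + h)))
      + (logistic (Λ + h) - (logistic Λ + L1 Λ * h))
      + (L1 Λ * (h - κ * V * (Λ₀ - Λ)))
      + (σ^2/2 * (L2 (Λ + h) - L2 Λ)) := by
    simp only [L1, L2]
    ring
  rw [decomp]
  have t2 : |L1 Λ * (h - κ * V * (Λ₀ - Λ))| ≤ κ^2 * V^2 * |Λ₀ - Λ| := by
    rw [abs_mul]
    calc |L1 Λ| * |h - κ * V * (Λ₀ - Λ)| ≤ 1 * (κ^2 * V^2 * |Λ₀ - Λ|) :=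
        mul_le_mul (le_trans hL1 (by norm_num)) hdiff (abs_nonneg _) (by norm_num)
      _ = κ^2 * V^2 * |Λ₀ - Λ| := one_mul _
  have t3 : |σ^2/2 * (L2 (Λ + h) - L2 Λ)| ≤ 2 * σ^2 * (κ * V * |Λ₀ - Λ|) := by
    rw [abs_mul, abs_of_nonneg (by positivity : (0:ℝ) ≤ σ^2/2)]
    calc σ^2/2 * |L2 (Λ + h) - L2 Λ| ≤ σ^2/2 * (4 * |h|) :=
        mul_le_mul_of_nonneg_left E3 (by positivity)
      _ ≤ σ^2/2 * (4 * (κ * V * |Λ₀ - Λ|)) := by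
          apply mul_le_mul_of_nonneg_left _ (by positivity)
          linarith
      _ = 2 * σ^2 * (κ * V * |Λ₀ - Λ|) := by ring
  have e2' : |logistic (Λ + h) - (logistic Λ + L1 Λ * h)| ≤ (κ * V * |Λ₀ - Λ|)^2 / 2 := by
    refine le_trans E2 ?_
    have hp2 : |h|^2 ≤ (κ * V * |Λ₀ - Λ|)^2 := by
      apply pow_le_pow_left₀ (abs_nonneg _) habs
    linarith
  refine le_trans (abs_add4 _ _ _ _) ?_
  have hW : (0:ℝ) ≤ |Λ₀ - Λ| := abs_nonneg _
  have hσ4 : (0:ℝ) ≤ σ^4 := by positivity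
  have hκ2 : (0:ℝ) ≤ κ^2 := sq_nonneg _
  have hamgm : 2 * κ * σ^2 ≤ κ^2 + σ^4 := by nlinarith [sq_nonneg (κ - σ^2)]
  have s2 : |logistic (Λ + h) - (logistic Λ + L1 Λ * h)| ≤ κ^2 * V^2 * (Λ₀ - Λ)^2 / 2 := by
    refine le_trans e2' (le_of_eq ?_)
    rw [mul_pow, mul_pow, sq_abs]
  have s4 : |σ^2/2 * (L2 (Λ + h) - L2 Λ)| ≤ (κ^2 + σ^4) * (V * |Λ₀ - Λ|) := by
    calc |σ^2/2 * (L2 (Λ + h) - L2 Λ)| ≤ 2 * σ^2 * (κ * V * |Λ₀ - Λ|) := t3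
      _ = (2 * κ * σ^2) * (V * |Λ₀ - Λ|) := by ring
      _ ≤ (κ^2 + σ^4) * (V * |Λ₀ - Λ|) :=
          mul_le_mul_of_nonneg_right hamgm (by positivity)
  have c1 : κ^2 * V^2 * (Λ₀ - Λ)^2 / 2 ≤ V^2 * (Λ₀ - Λ)^2 / 2 * (κ^2 + σ^4) := by
    linarith [mul_nonneg (mul_nonneg (sq_nonneg V) (sq_nonneg (Λ₀ - Λ))) hσ4]
  have c2 : κ^2 * V^2 * |Λ₀ - Λ| ≤ V^2 * |Λ₀ - Λ| * (κ^2 + σ^4) := by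
    linarith [mul_nonneg (mul_nonneg (sq_nonneg V) hW) hσ4]
  linarith [E1, s2, t2, s4, c1, c2, hκ2, hσ4,
    mul_nonneg (mul_nonneg (sq_nonneg V) hW) hσ4,
    mul_nonneg (mul_nonneg (sq_nonneg V) (sq_nonneg (Λ₀ - Λ))) hσ4]

end BLOaux

/-- Bias expansion of the BLO model: writing `Φ = s(Λ(p))`, the bias
`E[s(Λ̂_κ + ε)] - p` with `ε ~ N(0,σ²)` equals `(Φ - p)` plus the Attraction
term `κ Φ(1-Φ) V_p (Λ₀ - Λ(p))` plus the Repulsion term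
`(σ²/2) Φ(1-Φ)(1-2Φ)`, up to an error `O(κ² + σ⁴)`. -/
theorem stmt10 (Δm Δp Ψ Λ₀ p : ℝ) (hΔ : Δm < Δp) (hΨ : 0 < Ψ)
    (hp : p ∈ Set.Ioo (0 : ℝ) 1) :
    ∃ C : ℝ, 0 < C ∧ ∃ δ : ℝ, 0 < δ ∧
      ∀ κ ∈ Set.Icc (0 : ℝ) δ, ∀ σ ∈ Set.Ioc (0 : ℝ) δ,
        |((∫ x, logistic (bloHatKappa Δm Δp Ψ Λ₀ κ p + x)
              ∂(gaussianReal 0 ((σ ^ 2).toNNReal))) - p) -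
            (logistic (bloLambda Δm Δp Ψ p) - p) -
            κ * logistic (bloLambda Δm Δp Ψ p) *
              (1 - logistic (bloLambda Δm Δp Ψ p)) * (p * (1 - p)) *
              (Λ₀ - bloLambda Δm Δp Ψ p) -
            σ ^ 2 / 2 * (logistic (bloLambda Δm Δp Ψ p) *
              (1 - logistic (bloLambda Δm Δp Ψ p)) *
              (1 - 2 * logistic (bloLambda Δm Δp Ψ p)))| ≤
          C * (κ ^ 2 + σ ^ 4) := by
  obtain ⟨hp0, hp1⟩ := hp
  have hV : (0:ℝ) < p * (1 - p) := by nlinarith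
  refine ⟨3 + ((p * (1 - p))^2 * |Λ₀ - bloLambda Δm Δp Ψ p|
      + (p * (1 - p))^2 * (Λ₀ - bloLambda Δm Δp Ψ p)^2 / 2)
      + (p * (1 - p)) * |Λ₀ - bloLambda Δm Δp Ψ p| + 1, by positivity, 1, one_pos, ?_⟩
  intro κ hκ σ hσ
  have H := BLOaux.main_est (bloLambda Δm Δp Ψ p) Λ₀ (p * (1 - p)) hV κ σ hκ.1 hσ.1
  simp only [bloHatKappa]
  convert H using 2
  ring
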